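/- Let A_1, ..., A_m be n×n complex matrices and let α_1, ..., α_m be positive real numbers such that every eigenvalue of the matrix A = α_1 A_1 + ... + α_m A_m has strictly negative real part. Then there exists η > 0 such that the spectral radius of the product exp(η α_m A_m) · exp(η α_{m-1} A_{m-1}) · ... · exp(η α_1 A_1) is strictly less than 1. -/

import Mathlib

open Filter Topology
open scoped ENNReal

section Aux

open NormedSpace Nat Matrix

attribute [local instance] Matrix.linftyOpNormedRing Matrix.linftyOpNormedAlgebra

namespace StableCombAux

variable {n : ℕ}

lemma norm_pow_le_aux {𝔸 : Type*} [SeminormedRing 𝔸] [NormOneClass 𝔸] (x : 𝔸) :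
    ∀ j : ℕ, ‖x ^ j‖ ≤ ‖x‖ ^ j
  | 0 => by simp
  | (j + 1) => by
      calc ‖x ^ (j + 1)‖ = ‖x ^ j * x‖ := by rw [pow_succ]
        _ ≤ ‖x ^ j‖ * ‖x‖ := norm_mul_le _ _
        _ ≤ ‖x‖ ^ j * ‖x‖ :=
            mul_le_mul_of_nonneg_right (norm_pow_le_aux x j) (norm_nonneg x)
        _ = ‖x‖ ^ (j + 1) := (pow_succ _ _).symm

lemma norm_list_sum_le {E : Type*} [SeminormedAddCommGroup E] :
    ∀ l : List E, ‖l.sum‖ ≤ (l.map norm).sum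
  | [] => by simp
  | a :: l => by
      simp only [List.sum_cons, List.map_cons]
      exact (norm_add_le _ _).trans (add_le_add_right (norm_list_sum_le l) _)

lemma norm_exp_le {𝔸 : Type*} [NormedRing 𝔸] [NormedAlgebra ℂ 𝔸] [CompleteSpace 𝔸]
    [NormOneClass 𝔸] (x : 𝔸) : ‖exp x‖ ≤ Real.exp ‖x‖ := by
  rw [exp_eq_tsum ℂ]
  refine (norm_tsum_le_tsum_norm (norm_expSeries_summable' x)).trans ?_
  have hx : Real.exp ‖x‖ = ∑' j : ℕ, ‖x‖ ^ j / (j ! : ℝ) := by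
    rw [Real.exp_eq_exp_ℝ, exp_eq_tsum_div]
  rw [hx]
  refine Summable.tsum_le_tsum (fun j => ?_) (norm_expSeries_summable' x)
    (Real.summable_pow_div_factorial ‖x‖)
  have h1 : ‖((j ! : ℂ))⁻¹‖ = ((j ! : ℝ))⁻¹ := by
    rw [norm_inv]
    norm_num
  rw [norm_smul, h1]
  calc ((j ! : ℝ))⁻¹ * ‖x ^ j‖ ≤ ((j ! : ℝ))⁻¹ * ‖x‖ ^ j := by
        have := norm_pow_le_aux x j
        gcongr
    _ = ‖x‖ ^ j / (j ! : ℝ) := by rw [div_eq_mul_inv, mul_comm]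

lemma prodExp_zero (l : List (Matrix (Fin n) (Fin n) ℂ)) :
    (l.map (fun B => exp ((0 : ℝ) • B))).prod = 1 := by
  induction l with
  | nil => simp
  | cons B l ih => simp [ih, exp_zero]

lemma hasDerivAt_prodExp (l : List (Matrix (Fin n) (Fin n) ℂ)) :
    HasDerivAt (fun τ : ℝ => (l.map (fun B => exp (τ • B))).prod) l.sum 0 := by
  induction l with
  | nil => exact hasDerivAt_const (0 : ℝ) (1 : Matrix (Fin n) (Fin n) ℂ)
  | cons B l ih =>
      have h1 : HasDerivAt (fun τ : ℝ => exp (τ • B)) B 0 := by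
        have h := hasDerivAt_exp_smul_const (𝕂 := ℝ) B (0 : ℝ)
        simp at h
        exact h
      have h2 := h1.mul ih
      simp only [List.map_cons, List.prod_cons, List.sum_cons]
      simp [prodExp_zero, exp_zero] at h2
      exact h2

lemma norm_prodExp_le [Nonempty (Fin n)] (l : List (Matrix (Fin n) (Fin n) ℂ)) (τ : ℝ) :
    ‖(l.map (fun B => exp (τ • B))).prod‖ ≤ Real.exp (|τ| * (l.map norm).sum) := by
  induction l with
  | nil => simpa using (Matrix.linfty_opNormOneClass (α := ℂ) (n := Fin n)).norm_one.le
  | cons B l ih =>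
      simp only [List.map_cons, List.prod_cons, List.sum_cons]
      calc ‖exp (τ • B) * (l.map (fun B => exp (τ • B))).prod‖
          ≤ ‖exp (τ • B)‖ * ‖(l.map (fun B => exp (τ • B))).prod‖ := norm_mul_le _ _
        _ ≤ Real.exp ‖τ • B‖ * Real.exp (|τ| * (l.map norm).sum) :=
            mul_le_mul (norm_exp_le _) ih (norm_nonneg _) (Real.exp_pos _).le
        _ = Real.exp (|τ| * (‖B‖ + (l.map norm).sum)) := by
            rw [← Real.exp_add, norm_smul, Real.norm_eq_abs]
            ring_nf

lemma norm_pow_sub_pow_le {𝔸 : Type*} [NormedRing 𝔸] [NormOneClass 𝔸] (a b : 𝔸) (Mb : ℝ)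
    (hM : 1 ≤ Mb) (ha : ‖a‖ ≤ Mb) (hb : ‖b‖ ≤ Mb) :
    ∀ k : ℕ, ‖a ^ k - b ^ k‖ ≤ k * Mb ^ k * ‖a - b‖
  | 0 => by simp
  | (k + 1) => by
      have hk := norm_pow_sub_pow_le a b Mb hM ha hb k
      have key : a ^ (k + 1) - b ^ (k + 1) = a ^ k * (a - b) + (a ^ k - b ^ k) * b := by
        rw [pow_succ, pow_succ]
        noncomm_ring
      have h1 : ‖a ^ k‖ ≤ Mb ^ k :=
        (norm_pow_le_aux a k).trans (pow_le_pow_left₀ (norm_nonneg a) ha k)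
      have hMk : (0 : ℝ) ≤ Mb ^ k := by positivity
      have hd : (0 : ℝ) ≤ ‖a - b‖ := norm_nonneg _
      have hMe : Mb ^ (k + 1) = Mb ^ k * Mb := pow_succ _ _
      have haux : Mb ^ k * 1 * ‖a - b‖ ≤ Mb ^ k * Mb * ‖a - b‖ :=
        mul_le_mul_of_nonneg_right (mul_le_mul_of_nonneg_left hM hMk) hd
      calc ‖a ^ (k + 1) - b ^ (k + 1)‖
          ≤ ‖a ^ k * (a - b)‖ + ‖(a ^ k - b ^ k) * b‖ := by rw [key]; exact norm_add_le _ _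
        _ ≤ ‖a ^ k‖ * ‖a - b‖ + ‖a ^ k - b ^ k‖ * ‖b‖ :=
            add_le_add (norm_mul_le _ _) (norm_mul_le _ _)
        _ ≤ Mb ^ k * ‖a - b‖ + (k * Mb ^ k * ‖a - b‖) * Mb := by
            refine add_le_add (mul_le_mul_of_nonneg_right h1 hd) ?_
            refine mul_le_mul hk hb (norm_nonneg _) ?_
            positivity
        _ ≤ ((k : ℕ) + 1 : ℕ) * Mb ^ (k + 1) * ‖a - b‖ := by
            push_cast
            rw [hMe]
            nlinarith [haux]

lemma exp_smul_decomp (S : Matrix (Fin n) (Fin n) ℂ) (μ : ℂ) (t : ℝ) :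
    exp (t • S) = Complex.exp (t * μ) • exp (t • (S - μ • 1)) := by
  have hsplit : t • S = t • (μ • (1 : Matrix (Fin n) (Fin n) ℂ)) + t • (S - μ • 1) := by
    rw [← smul_add]
    congr 1
    abel
  have hcomm : Commute (t • (μ • (1 : Matrix (Fin n) (Fin n) ℂ))) (t • (S - μ • 1)) :=
    (((Commute.one_left (S - μ • 1)).smul_left μ).smul_left t).smul_right t
  have h1 : t • (μ • (1 : Matrix (Fin n) (Fin n) ℂ))
      = algebraMap ℂ (Matrix (Fin n) (Fin n) ℂ) ((t : ℂ) * μ) := by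
    rw [Algebra.algebraMap_eq_smul_one, ← smul_smul, ← algebraMap_smul ℂ t]
    norm_num
  have h2 : exp (algebraMap ℂ (Matrix (Fin n) (Fin n) ℂ) ((t : ℂ) * μ))
      = Complex.exp ((t : ℂ) * μ) • (1 : Matrix (Fin n) (Fin n) ℂ) := by
    have := map_exp (algebraMap ℂ (Matrix (Fin n) (Fin n) ℂ))
      (continuous_algebraMap ℂ _) ((t : ℂ) * μ)
    rw [← Complex.exp_eq_exp_ℂ] at this
    rw [Algebra.algebraMap_eq_smul_one] at this
    exact this.symm
  rw [hsplit, Matrix.exp_add_of_commute _ _ hcomm, h1, h2, smul_mul_assoc, one_mul]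

lemma exp_mulVec_eq (G : Matrix (Fin n) (Fin n) ℂ) (v : Fin n → ℂ) (k : ℕ)
    (hk : (G ^ k) *ᵥ v = 0) (t : ℝ) :
    (exp (t • G)) *ᵥ v =
      ∑ j ∈ Finset.range k, (((j ! : ℂ))⁻¹ * (t : ℂ) ^ j) • ((G ^ j) *ᵥ v) := by
  classical
  let Φl : Matrix (Fin n) (Fin n) ℂ →ₗ[ℂ] (Fin n → ℂ) :=
    { toFun := fun X => X *ᵥ v
      map_add' := fun X Y => Matrix.add_mulVec X Y v
      map_smul' := fun c X => Matrix.smul_mulVec c X v }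
  let Φ : Matrix (Fin n) (Fin n) ℂ →L[ℂ] (Fin n → ℂ) := LinearMap.toContinuousLinearMap Φl
  have hsum : HasSum (fun j : ℕ => ((j ! : ℂ))⁻¹ • (t • G) ^ j) (exp (t • G)) :=
    exp_series_hasSum_exp' (t • G)
  have h2 : HasSum (fun j : ℕ => Φ (((j ! : ℂ))⁻¹ • (t • G) ^ j)) (Φ (exp (t • G))) :=
    Φ.hasSum hsum
  have hterm : ∀ j : ℕ, Φ (((j ! : ℂ))⁻¹ • (t • G) ^ j)
      = (((j ! : ℂ))⁻¹ * (t : ℂ) ^ j) • ((G ^ j) *ᵥ v) := by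
    intro j
    have hp : (t • G) ^ j = ((t : ℂ) ^ j) • G ^ j := by
      rw [smul_pow, ← algebraMap_smul ℂ (t ^ j) (G ^ j)]
      norm_num
    rw [hp]
    show (((j ! : ℂ))⁻¹ • ((t : ℂ) ^ j) • G ^ j) *ᵥ v = _
    rw [smul_smul, Matrix.smul_mulVec]
  have hvan : ∀ j ∉ Finset.range k, (((j ! : ℂ))⁻¹ * (t : ℂ) ^ j) • ((G ^ j) *ᵥ v) = 0 := by
    intro j hj
    rw [Finset.mem_range, not_lt] at hj
    have hGe : G ^ j = G ^ (j - k) * G ^ k := by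
      rw [← pow_add]
      congr 1
      omega
    rw [hGe, ← Matrix.mulVec_mulVec, hk, Matrix.mulVec_zero, smul_zero]
  have h3 : HasSum (fun j : ℕ => (((j ! : ℂ))⁻¹ * (t : ℂ) ^ j) • ((G ^ j) *ᵥ v))
      (∑ j ∈ Finset.range k, (((j ! : ℂ))⁻¹ * (t : ℂ) ^ j) • ((G ^ j) *ᵥ v)) :=
    hasSum_sum_of_ne_finset_zero hvan
  have h2' : HasSum (fun j : ℕ => (((j ! : ℂ))⁻¹ * (t : ℂ) ^ j) • ((G ^ j) *ᵥ v))
      (Φ (exp (t • G))) := by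
    simpa only [hterm] using h2
  exact h2'.unique h3

lemma tendsto_pow_mul_exp (b : ℝ) (hb : b < 0) (j : ℕ) :
    Tendsto (fun N : ℕ => (N : ℝ) ^ j * Real.exp (b * N)) atTop (𝓝 0) := by
  have hbpos : 0 < -b := by linarith
  have h1 : Tendsto (fun x : ℝ => x ^ j * Real.exp (-x)) atTop (𝓝 0) :=
    Real.tendsto_pow_mul_exp_neg_atTop_nhds_zero j
  have h2 : Tendsto (fun N : ℕ => (-b) * (N : ℝ)) atTop atTop :=
    (tendsto_natCast_atTop_atTop).const_mul_atTop hbpos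
  have h3 := (h1.comp h2).const_mul (((-b) ^ j)⁻¹)
  rw [mul_zero] at h3
  refine h3.congr fun N => ?_
  have hbne : (-b) ≠ 0 := ne_of_gt hbpos
  have harg : -(-b * (N : ℝ)) = b * N := by ring
  simp only [Function.comp_apply, mul_pow, harg]
  field_simp

lemma tendsto_exp_nsmul (S : Matrix (Fin n) (Fin n) ℂ)
    (hS : ∀ μ ∈ spectrum ℂ S, μ.re < 0) :
    Tendsto (fun N : ℕ => exp ((N : ℝ) • S)) atTop (𝓝 0) := by
  classical
  have key : ∀ v : Fin n → ℂ,
      Tendsto (fun N : ℕ => (exp ((N : ℝ) • S)) *ᵥ v) atTop (𝓝 0) := by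
    set f : Module.End ℂ (Fin n → ℂ) := Matrix.toLinAlgEquiv' S with hf
    set p : Submodule ℂ (Fin n → ℂ) :=
      { carrier := {v | Tendsto (fun N : ℕ => (exp ((N : ℝ) • S)) *ᵥ v) atTop (𝓝 0)}
        add_mem' := by
          intro a b ha hb
          have := ha.add hb
          simpa [Matrix.mulVec_add] using this
        zero_mem' := by
          simp only [Set.mem_setOf_eq, Matrix.mulVec_zero]
          exact tendsto_const_nhds
        smul_mem' := by
          intro c v hv
          have := hv.const_smul c
          simpa [Matrix.mulVec_smul] using this } with hp
    suffices hptop : p = ⊤ by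
      intro v
      have hv : v ∈ p := hptop ▸ Submodule.mem_top
      exact hv
    rw [eq_top_iff, ← Module.End.iSup_maxGenEigenspace_eq_top f]
    refine iSup_le fun μ => ?_
    intro v hv
    obtain ⟨k, hk⟩ := Module.End.mem_genEigenspace_top.mp hv
    rw [LinearMap.mem_ker] at hk
    rcases eq_or_ne v 0 with rfl | hv0
    · exact p.zero_mem
    have hinj_pow : ∀ (g : Module.End ℂ (Fin n → ℂ)), Function.Injective g →
        ∀ j : ℕ, Function.Injective (g ^ j) := by
      intro g hg j
      induction j with
      | zero => exact Function.injective_id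
      | succ j ih =>
          intro x y hxy
          rw [pow_succ] at hxy
          have : (g ^ j) (g x) = (g ^ j) (g y) := by
            simpa [Module.End.mul_apply] using hxy
          exact hg (ih this)
    have hμ : μ ∈ spectrum ℂ S := by
      rw [← AlgEquiv.spectrum_eq (Matrix.toLinAlgEquiv' (R := ℂ) (n := Fin n)) S, ← hf]
      rw [spectrum.mem_iff]
      intro hunit
      have hunit' : IsUnit (f - μ • (1 : Module.End ℂ (Fin n → ℂ))) := by
        have heq : f - μ • (1 : Module.End ℂ (Fin n → ℂ))
            = -(algebraMap ℂ (Module.End ℂ (Fin n → ℂ)) μ - f) := by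
          rw [Algebra.algebraMap_eq_smul_one]
          abel
        rw [heq]
        exact hunit.neg
      have hinj : Function.Injective (f - μ • (1 : Module.End ℂ (Fin n → ℂ))) := by
        obtain ⟨u, hu⟩ := hunit'
        intro x y hxy
        have h1 : ((↑u⁻¹ * ↑u : Module.End ℂ (Fin n → ℂ))) x
            = ((↑u⁻¹ * ↑u : Module.End ℂ (Fin n → ℂ))) y := by
          simp only [Module.End.mul_apply, hu, hxy]
        simpa [Units.inv_mul] using h1
      exact hv0 (hinj_pow _ hinj k (by simpa using hk))
    have hre : μ.re < 0 := hS μ hμ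
    have hGk : (((S - μ • 1) ^ k)) *ᵥ v = 0 := by
      have he : Matrix.toLinAlgEquiv' ((S - μ • (1 : Matrix (Fin n) (Fin n) ℂ)) ^ k)
          = (f - μ • 1) ^ k := by
        rw [map_pow, map_sub, _root_.map_smul, _root_.map_one, hf]
      calc ((S - μ • 1) ^ k) *ᵥ v
          = Matrix.toLinAlgEquiv' ((S - μ • 1) ^ k) v := (Matrix.toLinAlgEquiv'_apply _ _).symm
        _ = 0 := by rw [he]; exact hk
    show Tendsto (fun N : ℕ => (exp ((N : ℝ) • S)) *ᵥ v) atTop (𝓝 0)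
    have habs : ∀ N : ℕ, (exp ((N : ℝ) • S)) *ᵥ v =
        Complex.exp ((N : ℝ) * μ) •
          ∑ j ∈ Finset.range k,
            (((j ! : ℂ))⁻¹ * ((N : ℝ) : ℂ) ^ j) • (((S - μ • 1) ^ j) *ᵥ v) := by
      intro N
      rw [exp_smul_decomp S μ (N : ℝ), Matrix.smul_mulVec,
        exp_mulVec_eq (S - μ • 1) v k hGk]
    refine squeeze_zero_norm (a := fun N : ℕ => ∑ j ∈ Finset.range k,
        (((j ! : ℝ))⁻¹ * ‖((S - μ • 1) ^ j) *ᵥ v‖) * ((N : ℝ) ^ j * Real.exp (μ.re * N)))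
      (fun N => ?_) ?_
    · rw [habs N, norm_smul]
      have hce : ‖Complex.exp ((N : ℝ) * μ)‖ = Real.exp (μ.re * N) := by
        rw [Complex.norm_exp]
        congr 1
        simp [Complex.mul_re]
        ring
      rw [hce]
      calc Real.exp (μ.re * N) * ‖∑ j ∈ Finset.range k,
            (((j ! : ℂ))⁻¹ * ((N : ℝ) : ℂ) ^ j) • (((S - μ • 1) ^ j) *ᵥ v)‖
          ≤ Real.exp (μ.re * N) * ∑ j ∈ Finset.range k,
            ((j ! : ℝ))⁻¹ * (N : ℝ) ^ j * ‖((S - μ • 1) ^ j) *ᵥ v‖ := by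
            refine mul_le_mul_of_nonneg_left ?_ (Real.exp_nonneg _)
            refine (norm_sum_le _ _).trans ?_
            refine Finset.sum_le_sum fun j _ => ?_
            rw [norm_smul, norm_mul, norm_inv, norm_pow]
            simp [Complex.norm_natCast]
        _ = ∑ j ∈ Finset.range k,
            (((j ! : ℝ))⁻¹ * ‖((S - μ • 1) ^ j) *ᵥ v‖) * ((N : ℝ) ^ j * Real.exp (μ.re * N)) := by
            rw [Finset.mul_sum]
            exact Finset.sum_congr rfl fun j _ => by ring
    · have ht := tendsto_finset_sum (Finset.range k)
        (fun j (_ : j ∈ Finset.range k) => (tendsto_pow_mul_exp μ.re hre j).const_mul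
          (((j ! : ℝ))⁻¹ * ‖((S - μ • 1) ^ j) *ᵥ v‖))
      simpa using ht
  have hent : ∀ i j : Fin n, Tendsto (fun N : ℕ => exp ((N : ℝ) • S) i j) atTop (𝓝 0) := by
    intro i j
    have h := key (Pi.single j 1)
    have h2 := tendsto_pi_nhds.mp h i
    simp only [Pi.zero_apply] at h2
    have hrw : ∀ N : ℕ, (exp ((N : ℝ) • S) *ᵥ Pi.single j 1) i
        = exp ((N : ℝ) • S) i j := by
      intro N
      simp [Matrix.mulVec, dotProduct, Pi.single_apply]
    exact Tendsto.congr hrw h2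
  refine tendsto_pi_nhds.mpr fun i => tendsto_pi_nhds.mpr fun j => ?_
  simpa using hent i j

end StableCombAux

end Aux

/-- If a positive combination `A = ∑ i, α i • A i` of the subsystem
matrices is stable (every eigenvalue has strictly negative real part), then there is a
dwell-time scaling `η > 0` such that the one-period state-transition matrix
`exp (η αₘ Aₘ) ⋯ exp (η α₁ A₁)` has spectral radius strictly less than `1`. -/
theorem stable_convex_combination_implies_periodic_contraction
    {n m : ℕ} (A : Fin m → Matrix (Fin n) (Fin n) ℂ) (α : Fin m → ℝ)
    (hα : ∀ i, 0 < α i)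
    (hstable : ∀ μ ∈ spectrum ℂ (∑ i, (α i) • A i), μ.re < 0) :
    ∃ η : ℝ, 0 < η ∧
      spectralRadius ℂ
        (((List.ofFn fun i : Fin m =>
            NormedSpace.exp ((η * α i) • A i)).reverse).prod) < 1 := by
  rcases Nat.eq_zero_or_pos n with hn | hn
  · -- trivial case `n = 0`: the matrix algebra is a subsingleton, the spectrum is empty
    subst hn
    haveI : Subsingleton (Matrix (Fin 0) (Fin 0) ℂ) :=
      ⟨fun a b => by ext i j; exact i.elim0⟩
    refine ⟨1, one_pos, ?_⟩
    have hspec : spectrum ℂ (((List.ofFn fun i : Fin m =>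
        NormedSpace.exp ((1 * α i) • A i)).reverse).prod) = ∅ := by
      ext μ
      simp only [spectrum.mem_iff, Set.mem_empty_iff_false, iff_false, not_not]
      exact isUnit_of_subsingleton _
    rw [spectralRadius, hspec]
    simpa using ENNReal.zero_lt_one
  · haveI : Nonempty (Fin n) := ⟨⟨0, hn⟩⟩
    letI : NormedRing (Matrix (Fin n) (Fin n) ℂ) := Matrix.linftyOpNormedRing
    letI : NormedAlgebra ℂ (Matrix (Fin n) (Fin n) ℂ) := Matrix.linftyOpNormedAlgebra
    letI : NormedAlgebra ℝ (Matrix (Fin n) (Fin n) ℂ) := Matrix.linftyOpNormedAlgebra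
    set B : Fin m → Matrix (Fin n) (Fin n) ℂ := fun i => α i • A i with hB
    set S : Matrix (Fin n) (Fin n) ℂ := ∑ i : Fin m, B i with hSdef
    set L : List (Matrix (Fin n) (Fin n) ℂ) := (List.ofFn B).reverse with hL
    have hLsum : L.sum = S := by rw [hL, List.sum_reverse, List.sum_ofFn]
    set L₀ : ℝ := (L.map norm).sum with hL₀
    have hL₀0 : 0 ≤ L₀ := by
      rw [hL₀]
      refine List.sum_nonneg fun x hx => ?_
      obtain ⟨y, _, rfl⟩ := List.mem_map.mp hx
      exact norm_nonneg y
    have hSnorm : ‖S‖ ≤ L₀ := by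
      rw [← hLsum, hL₀]
      exact StableCombAux.norm_list_sum_le L
    set P : ℝ → Matrix (Fin n) (Fin n) ℂ :=
      fun τ => (L.map (fun Bi => NormedSpace.exp (τ • Bi))).prod with hP
    -- the little-o estimate at `0`
    have hder : HasDerivAt (fun τ : ℝ => P τ - NormedSpace.exp (τ • S)) 0 0 := by
      have h1 := StableCombAux.hasDerivAt_prodExp L
      have h2 : HasDerivAt (fun τ : ℝ => NormedSpace.exp (τ • S)) S 0 := by
        have h := hasDerivAt_exp_smul_const (𝕂 := ℝ) S (0 : ℝ)
        simp at h
        exact h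
      have := h1.sub h2
      rw [hLsum, sub_self] at this
      exact this
    have hlo : (fun τ : ℝ => P τ - NormedSpace.exp (τ • S)) =o[𝓝 0] fun τ : ℝ => τ := by
      have h := hasDerivAt_iff_isLittleO.mp hder
      have hzero : P 0 = 1 := by
        rw [hP]
        exact StableCombAux.prodExp_zero L
      simpa [hzero] using h
    -- choose the period `T`
    obtain ⟨T, hT1, hTnorm⟩ : ∃ T : ℕ, 1 ≤ T ∧
        ‖NormedSpace.exp ((T : ℝ) • S)‖ < 1 / 2 := by
      have h := StableCombAux.tendsto_exp_nsmul S hstable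
      have hn2 := h.norm
      rw [norm_zero] at hn2
      have h3 := hn2.eventually_lt_const (by norm_num : (0 : ℝ) < 1 / 2)
      obtain ⟨T, hT⟩ := (h3.and (eventually_ge_atTop 1)).exists
      exact ⟨T, hT.2, hT.1⟩
    have hTpos : (0 : ℝ) < T := by exact_mod_cast hT1
    set K : ℝ := Real.exp ((T : ℝ) * L₀) with hK
    have hK1 : 1 ≤ K := Real.one_le_exp (by positivity)
    set ε : ℝ := 1 / (2 * (K * T + 1)) with hε
    have hεpos : 0 < ε := by
      rw [hε]
      positivity
    have hev : ∀ᶠ τ : ℝ in 𝓝 0, ‖P τ - NormedSpace.exp (τ • S)‖ ≤ ε * ‖τ‖ :=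
      Asymptotics.isLittleO_iff.mp hlo hεpos
    obtain ⟨δ, hδpos, hδ⟩ := Metric.eventually_nhds_iff.mp hev
    obtain ⟨k, hk1, hkδ⟩ : ∃ k : ℕ, 1 ≤ k ∧ (T : ℝ) / k < δ := by
      obtain ⟨k0, hk0⟩ := exists_nat_gt ((T : ℝ) / δ)
      refine ⟨k0 + 1, Nat.le_add_left 1 k0, ?_⟩
      have hk0pos : (0 : ℝ) < (k0 : ℝ) + 1 := by positivity
      rw [div_lt_iff₀ (by exact_mod_cast hk0pos)]
      have : (T : ℝ) < δ * k0 := by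
        have := (div_lt_iff₀ hδpos).mp hk0
        linarith
      push_cast
      nlinarith [hδpos]
    have hkpos : (0 : ℝ) < k := by exact_mod_cast hk1
    set η : ℝ := (T : ℝ) / k with hη
    have hηpos : 0 < η := div_pos hTpos hkpos
    refine ⟨η, hηpos, ?_⟩
    have hgoal : ((List.ofFn fun i : Fin m =>
        NormedSpace.exp ((η * α i) • A i)).reverse).prod = P η := by
      have h1 : (List.map (fun Bi => NormedSpace.exp (η • Bi)) (List.ofFn B).reverse)
          = (List.ofFn fun i : Fin m => NormedSpace.exp ((η * α i) • A i)).reverse := by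
        rw [List.map_reverse]
        congr 1
        rw [List.map_ofFn]
        congr 1
        funext i
        rw [Function.comp_apply, hB, smul_smul]
      show _ = (List.map (fun Bi => NormedSpace.exp (η • Bi)) L).prod
      rw [hL, h1]
    rw [hgoal]
    have hknz : k ≠ 0 := by omega
    have hkT : (k : ℝ) * η = T := by
      rw [hη]
      field_simp
    -- norm bounds
    have hPb : ‖P η‖ ≤ Real.exp (η * L₀) := by
      have h := StableCombAux.norm_prodExp_le L η
      rwa [abs_of_pos hηpos, ← hL₀] at h
    have hEb : ‖NormedSpace.exp (η • S)‖ ≤ Real.exp (η * L₀) := by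
      refine (StableCombAux.norm_exp_le _).trans ?_
      rw [norm_smul, Real.norm_eq_abs, abs_of_pos hηpos]
      exact Real.exp_le_exp.mpr (mul_le_mul_of_nonneg_left hSnorm hηpos.le)
    have hMb1 : (1 : ℝ) ≤ Real.exp (η * L₀) := Real.one_le_exp (by positivity)
    have hpow := StableCombAux.norm_pow_sub_pow_le (P η) (NormedSpace.exp (η • S))
      (Real.exp (η * L₀)) hMb1 hPb hEb k
    have hMbk : Real.exp (η * L₀) ^ k = K := by
      rw [← Real.exp_nat_mul, hK]
      congr 1
      rw [← mul_assoc, hkT]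
    have hdiff : ‖P η - NormedSpace.exp (η • S)‖ ≤ ε * η := by
      have hdist : dist η 0 < δ := by
        rw [Real.dist_eq, sub_zero, abs_of_pos hηpos]
        exact hkδ
      have h := hδ hdist
      rwa [Real.norm_eq_abs, abs_of_pos hηpos] at h
    have hEk : NormedSpace.exp (η • S) ^ k = NormedSpace.exp ((T : ℝ) • S) := by
      rw [← Matrix.exp_nsmul]
      congr 1
      rw [← Nat.cast_smul_eq_nsmul ℝ, smul_smul, hkT]
    have hfinal : ‖P η ^ k‖ < 1 := by
      have htri : ‖P η ^ k‖ ≤ ‖NormedSpace.exp ((T : ℝ) • S)‖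
          + ‖P η ^ k - NormedSpace.exp (η • S) ^ k‖ := by
        rw [hEk]
        exact norm_le_norm_add_norm_sub' _ _
      have hsecond : ‖P η ^ k - NormedSpace.exp (η • S) ^ k‖ ≤ K * ε * T := by
        refine hpow.trans ?_
        rw [hMbk]
        calc (k : ℝ) * K * ‖P η - NormedSpace.exp (η • S)‖
            ≤ (k : ℝ) * K * (ε * η) := by
              refine mul_le_mul_of_nonneg_left hdiff ?_
              positivity
          _ = K * ε * ((k : ℝ) * η) := by ring
          _ = K * ε * T := by rw [hkT]
      have hKT : K * ε * T < 1 / 2 := by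
        have hKTpos : (0:ℝ) < K * T + 1 := by positivity
        have heq : K * ε * (T:ℝ) = (K * T) / (2 * (K * T + 1)) := by
          rw [hε]; field_simp
        rw [heq, div_lt_iff₀ (by positivity)]
        nlinarith [hKTpos]
      calc ‖P η ^ k‖ ≤ ‖NormedSpace.exp ((T : ℝ) • S)‖
          + ‖P η ^ k - NormedSpace.exp (η • S) ^ k‖ := htri
        _ < 1 / 2 + 1 / 2 := by
            exact add_lt_add_of_lt_of_le hTnorm (hsecond.trans_lt hKT).le
        _ = 1 := by norm_num
    -- conclude via the spectral radius power bound
    have hk' : k - 1 + 1 = k := Nat.succ_pred_eq_of_pos hk1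
    have hρ := spectrum.spectralRadius_le_pow_nnnorm_pow_one_div ℂ (P η) (k - 1)
    rw [hk'] at hρ
    rw [nnnorm_one, ENNReal.coe_one, ENNReal.one_rpow, mul_one] at hρ
    refine lt_of_le_of_lt hρ ?_
    have hc : (‖P η ^ k‖₊ : ℝ≥0∞) < 1 := by
      rw [← ENNReal.coe_one, ENNReal.coe_lt_coe, ← NNReal.coe_lt_coe]
      simpa [coe_nnnorm] using hfinal
    exact ENNReal.rpow_lt_one hc (by positivity)
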